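/- Leave-r-out strange point bound: Let N > r ≥ 1 and let W assign to each (r+1)-element subset of [N] at most one winner from that subset. For unit i₀, let w(i₀) count the ordered r-tuples (i₁,…,i_r) of distinct units in [N]\{i₀} such that i₀ is the winner of {i₀,i₁,…,i_r}. Fix α ∈ (0, r/(r+1)) and call i₀ strange if w(i₀) ≥ (1−α)·(N−1)!/(N−r−1)!. If s is the number of strange units, then (1−α)·s·(N−1)!/(N−r−1)! ≤ r!·[C(N, r+1) − C(N−s, r+1)]. -/
import Mathlib


open Finset

lemma inj_count {N r : ℕ} (u : Finset (Fin N)) (hu : u.card = r) :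
    (Finset.univ.filter (fun f : Fin r → Fin N =>
      Function.Injective f ∧ ∀ j, f j ∈ u)).card = r.factorial := by
  rw [Finset.card_bij' (t := (Finset.univ : Finset (Fin r ↪ ↥u)))
    (i := fun f hf => ⟨fun j => ⟨f j, ((Finset.mem_filter.1 hf).2.2 j)⟩,
      fun a b hab => (Finset.mem_filter.1 hf).2.1 (congrArg Subtype.val hab)⟩)
    (j := fun e _ => fun k => (e k : Fin N))]
  · rw [Finset.card_univ, Fintype.card_embedding_eq, Fintype.card_coe, hu, Fintype.card_fin,
      Nat.descFactorial_self]
  · intro a ha; exact Finset.mem_univ _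
  · intro e he
    refine Finset.mem_filter.2 ⟨Finset.mem_univ _, fun a b hab => e.injective (Subtype.ext hab),
      fun j => (e j).2⟩
  · intro a ha; rfl
  · intro e he; ext k; rfl

theorem lro_strange_bound (N r : ℕ) (hr : 1 ≤ r) (hrN : r < N)
    (W : Finset (Fin N) → Option (Fin N))
    (hW : ∀ t : Finset (Fin N), ∀ i : Fin N, W t = some i → i ∈ t)
    (α : ℝ) (hα0 : 0 < α) (hα1 : α < (r : ℝ) / ((r : ℝ) + 1))
    (w : Fin N → ℕ)
    (hw : ∀ i₀ : Fin N, w i₀ =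
      (Finset.univ.filter (fun f : Fin r → Fin N =>
        Function.Injective f ∧ (∀ j : Fin r, f j ≠ i₀) ∧
          W (insert i₀ (Finset.image f Finset.univ)) = some i₀)).card)
    (S : Finset (Fin N))
    (hS : S = Finset.univ.filter (fun i₀ : Fin N =>
      (1 - α) * ((N - 1).descFactorial r : ℝ) ≤ (w i₀ : ℝ)))
    (s : ℕ) (hs : s = S.card) :
    (1 - α) * (s : ℝ) * ((N - 1).descFactorial r : ℝ) ≤
      (r.factorial : ℝ) * ((N.choose (r + 1) : ℝ) - ((N - s).choose (r + 1) : ℝ)) := by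
  classical
  set A : Finset (Finset (Fin N)) := Finset.univ.powersetCard (r + 1) with hA
  set B : Fin N → Finset (Finset (Fin N)) := fun i₀ => A.filter (fun t => W t = some i₀) with hB
  -- Step A: for each i₀, w i₀ ≤ r! * (B i₀).card
  have key : ∀ i₀ : Fin N, w i₀ ≤ r.factorial * (B i₀).card := by
    intro i₀
    rw [hw i₀]
    refine Finset.card_le_mul_card_image_of_maps_to
      (f := fun f : Fin r → Fin N => insert i₀ (Finset.image f Finset.univ)) ?_ _ ?_
    · intro f hf
      obtain ⟨-, hinj, hne, hWin⟩ := Finset.mem_filter.1 hf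
      refine Finset.mem_filter.2 ⟨Finset.mem_powersetCard_univ.2 ?_, hWin⟩
      rw [Finset.card_insert_of_notMem, Finset.card_image_of_injective _ hinj,
        Finset.card_univ, Fintype.card_fin]
      simp only [Finset.mem_image, Finset.mem_univ, true_and, not_exists]
      exact fun j => hne j
    · intro t ht
      obtain ⟨htA, htW⟩ := Finset.mem_filter.1 ht
      have hit : i₀ ∈ t := hW t i₀ htW
      have htc : t.card = r + 1 := Finset.mem_powersetCard_univ.1 htA
      have hu : (t.erase i₀).card = r := by
        rw [Finset.card_erase_of_mem hit, htc]; rfl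
      calc _ ≤ (Finset.univ.filter (fun f : Fin r → Fin N =>
              Function.Injective f ∧ ∀ j, f j ∈ t.erase i₀)).card := by
              apply Finset.card_le_card
              intro f hf
              obtain ⟨hfP, heq⟩ := Finset.mem_filter.1 hf
              obtain ⟨-, hinj, hne, -⟩ := Finset.mem_filter.1 hfP
              refine Finset.mem_filter.2 ⟨Finset.mem_univ _, hinj, fun j => ?_⟩
              refine Finset.mem_erase.2 ⟨hne j, ?_⟩
              rw [← heq]
              exact Finset.mem_insert_of_mem (Finset.mem_image_of_mem f (Finset.mem_univ j))
        _ = r.factorial := inj_count _ hu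
  -- Step B: sum over S
  have hsum : ∑ i₀ ∈ S, w i₀ ≤ r.factorial * (S.biUnion B).card := by
    rw [Finset.card_biUnion, Finset.mul_sum]
    · exact Finset.sum_le_sum fun i₀ _ => key i₀
    · intro x hx y hy hxy
      simp only [Finset.disjoint_left]
      intro t htx hty
      exact hxy (Option.some_injective _
        ((Finset.mem_filter.1 htx).2.symm.trans (Finset.mem_filter.1 hty).2))
  -- Step C: card of union bounded by intersecting subsets
  have hsub : S.biUnion B ⊆ A.filter (fun t => (t ∩ S).Nonempty) := by
    intro t ht
    obtain ⟨i₀, hi₀, hti⟩ := Finset.mem_biUnion.1 ht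
    obtain ⟨htA, htW⟩ := Finset.mem_filter.1 hti
    exact Finset.mem_filter.2 ⟨htA, ⟨i₀, Finset.mem_inter.2 ⟨hW t i₀ htW, hi₀⟩⟩⟩
  have hTcard : (A.filter (fun t => (t ∩ S).Nonempty)).card
      = N.choose (r + 1) - (N - s).choose (r + 1) := by
    have h1 : (A.filter (fun t => ¬ (t ∩ S).Nonempty)) = Sᶜ.powersetCard (r + 1) := by
      ext t
      rw [Finset.mem_filter, Finset.mem_powersetCard, Finset.mem_powersetCard,
        Finset.not_nonempty_iff_eq_empty]
      constructor
      · rintro ⟨⟨-, hc⟩, he⟩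
        refine ⟨fun x hxt => Finset.mem_compl.2 fun hxS => ?_, hc⟩
        exact Finset.notMem_empty x (he ▸ Finset.mem_inter.2 ⟨hxt, hxS⟩)
      · rintro ⟨hsub', hc⟩
        refine ⟨⟨Finset.subset_univ t, hc⟩, Finset.eq_empty_of_forall_notMem fun x hx => ?_⟩
        obtain ⟨hxt, hxS⟩ := Finset.mem_inter.1 hx
        exact Finset.mem_compl.1 (hsub' hxt) hxS
    have h2 := Finset.card_filter_add_card_filter_not
      (s := A) (p := fun t => (t ∩ S).Nonempty)
    rw [h1, Finset.card_powersetCard, Finset.card_compl, Fintype.card_fin, ← hs] at h2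
    have h3 : A.card = N.choose (r + 1) := by
      rw [hA, Finset.card_powersetCard, Finset.card_univ, Fintype.card_fin]
    omega
  -- Step D: lower bound on the sum
  have hlow : (1 - α) * (s : ℝ) * ((N - 1).descFactorial r : ℝ)
      ≤ ∑ i₀ ∈ S, (w i₀ : ℝ) := by
    have : ∀ i₀ ∈ S, (1 - α) * ((N - 1).descFactorial r : ℝ) ≤ (w i₀ : ℝ) := by
      intro i₀ hi₀
      rw [hS] at hi₀
      exact (Finset.mem_filter.1 hi₀).2
    calc (1 - α) * (s : ℝ) * ((N - 1).descFactorial r : ℝ)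
        = ∑ _i₀ ∈ S, (1 - α) * ((N - 1).descFactorial r : ℝ) := by
          rw [Finset.sum_const, hs, nsmul_eq_mul]; ring
      _ ≤ ∑ i₀ ∈ S, (w i₀ : ℝ) := Finset.sum_le_sum this
  -- Combine
  have hle : ((N - s).choose (r + 1)) ≤ N.choose (r + 1) :=
    Nat.choose_le_choose _ (Nat.sub_le _ _)
  have hineq : (∑ i₀ ∈ S, w i₀ : ℕ) ≤ r.factorial * (N.choose (r + 1) - (N - s).choose (r + 1)) :=
    hsum.trans (Nat.mul_le_mul_left _ ((Finset.card_le_card hsub).trans_eq hTcard))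
  calc (1 - α) * (s : ℝ) * ((N - 1).descFactorial r : ℝ)
      ≤ ∑ i₀ ∈ S, (w i₀ : ℝ) := hlow
    _ = ((∑ i₀ ∈ S, w i₀ : ℕ) : ℝ) := by push_cast; rfl
    _ ≤ ((r.factorial * (N.choose (r + 1) - (N - s).choose (r + 1)) : ℕ) : ℝ) := by
        exact_mod_cast hineq
    _ = (r.factorial : ℝ) * ((N.choose (r + 1) : ℝ) - ((N - s).choose (r + 1) : ℝ)) := by
        rw [Nat.cast_mul, Nat.cast_sub hle]
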